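/- For the Bernoulli-lemniscate system, the function W(x,y) = V(I(x,y)) with V(s) = s²/(2(1+s²)^{3/4}) is a Lyapunov function for the vector field b: for every point p ∈ ℝ², the Euclidean inner product of the gradient of W at p with b(p) equals minus the squared Euclidean norm of the gradient of W at p, i.e. ⟨∇W(p), b(p)⟩ = −‖∇W(p)‖². (Equivalently, the gradient part −∇W and the Hamiltonian part of b are orthogonal, so the derivative of W along solutions of ẋ = b(x) is −|∇W|².) -/

import Mathlib

open scoped RealInnerProductSpace

/-- `I(x,y) = (x²+y²)² − 4(x²−y²)`. -/
noncomputable def lemI (x y : ℝ) : ℝ := (x ^ 2 + y ^ 2) ^ 2 - 4 * (x ^ 2 - y ^ 2)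

/-- `f(s) = s(s²+4)/(4(1+s²)^{7/4})`. -/
noncomputable def lemf (s : ℝ) : ℝ := s * (s ^ 2 + 4) / (4 * (1 + s ^ 2) ^ ((7 : ℝ) / 4))

/-- `g(s) = (s²+4)/(4(1+s²)^{11/8})`. -/
noncomputable def lemg (s : ℝ) : ℝ := (s ^ 2 + 4) / (4 * (1 + s ^ 2) ^ ((11 : ℝ) / 8))

/-- First component of the Bernoulli-lemniscate vector field. -/
noncomputable def lemb₁ (x y : ℝ) : ℝ :=
  -lemf (lemI x y) * (4 * x * (x ^ 2 + y ^ 2) - 8 * x) -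
    lemg (lemI x y) * (4 * y * (x ^ 2 + y ^ 2) + 8 * y)

/-- Second component of the Bernoulli-lemniscate vector field. -/
noncomputable def lemb₂ (x y : ℝ) : ℝ :=
  -lemf (lemI x y) * (4 * y * (x ^ 2 + y ^ 2) + 8 * y) -
    lemg (lemI x y) * (-4 * x * (x ^ 2 + y ^ 2) + 8 * x)

/-- The Bernoulli-lemniscate vector field `b : ℝ² → ℝ²`. -/
noncomputable def lemb (p : EuclideanSpace ℝ (Fin 2)) : EuclideanSpace ℝ (Fin 2) :=
  (WithLp.equiv 2 (Fin 2 → ℝ)).symm ![lemb₁ (p 0) (p 1), lemb₂ (p 0) (p 1)]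

/-- `V(s) = s²/(2(1+s²)^{3/4})`. -/
noncomputable def lemV (s : ℝ) : ℝ := s ^ 2 / (2 * (1 + s ^ 2) ^ ((3 : ℝ) / 4))

/-- The Lyapunov function `W = V ∘ I` on `ℝ²`. -/
noncomputable def lemW (p : EuclideanSpace ℝ (Fin 2)) : ℝ := lemV (lemI (p 0) (p 1))

lemma hasDerivAt_lemV (s : ℝ) : HasDerivAt lemV (lemf s) s := by
  have hA : (0:ℝ) < 1 + s ^ 2 := by positivity
  have h1 : HasDerivAt (fun t : ℝ => 1 + t ^ 2) (2 * s) s := by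
    simpa using ((hasDerivAt_pow 2 s).const_add 1)
  have h2 : HasDerivAt (fun t : ℝ => (1 + t ^ 2) ^ ((3:ℝ)/4))
      (2 * s * ((3:ℝ)/4) * (1 + s ^ 2) ^ ((3:ℝ)/4 - 1)) s :=
    h1.rpow_const (Or.inl hA.ne')
  have hden : 2 * (1 + s ^ 2) ^ ((3:ℝ)/4) ≠ 0 := by positivity
  have h3 := (hasDerivAt_pow 2 s).div (h2.const_mul 2) hden
  refine h3.congr_deriv (Eq.symm ?_)
  set u : ℝ := (1 + s ^ 2) ^ ((1:ℝ)/4) with hu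
  have hupos : 0 < u := Real.rpow_pos_of_pos hA _
  have hu4 : u ^ 4 = 1 + s ^ 2 := by
    rw [hu, ← Real.rpow_natCast ((1 + s^2) ^ ((1:ℝ)/4)) 4, ← Real.rpow_mul hA.le]
    norm_num
  have h34 : (1 + s ^ 2) ^ ((3:ℝ)/4) = u ^ 3 := by
    rw [hu, ← Real.rpow_natCast ((1 + s^2) ^ ((1:ℝ)/4)) 3, ← Real.rpow_mul hA.le]
    norm_num
  have h74 : (1 + s ^ 2) ^ ((7:ℝ)/4) = u ^ 7 := by
    rw [hu, ← Real.rpow_natCast ((1 + s^2) ^ ((1:ℝ)/4)) 7, ← Real.rpow_mul hA.le]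
    norm_num
  have hm14 : (1 + s ^ 2) ^ ((3:ℝ)/4 - 1) = u⁻¹ := by
    rw [show (3:ℝ)/4 - 1 = -(1/4) by norm_num, Real.rpow_neg hA.le, hu]
  rw [lemf, h74, h34, hm14]
  field_simp
  ring_nf
  linear_combination (-8*s) * hu4

lemma hasFDerivAt_lemI (p : EuclideanSpace ℝ (Fin 2)) :
    HasFDerivAt (fun q : EuclideanSpace ℝ (Fin 2) => lemI (q 0) (q 1))
      ((4 * (p 0) * ((p 0) ^ 2 + (p 1) ^ 2) - 8 * (p 0)) •
          (EuclideanSpace.proj 0 : EuclideanSpace ℝ (Fin 2) →L[ℝ] ℝ)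
        + (4 * (p 1) * ((p 0) ^ 2 + (p 1) ^ 2) + 8 * (p 1)) •
          (EuclideanSpace.proj 1 : EuclideanSpace ℝ (Fin 2) →L[ℝ] ℝ)) p := by
  have h0 : HasFDerivAt (fun q : EuclideanSpace ℝ (Fin 2) => q 0)
      (EuclideanSpace.proj 0 : EuclideanSpace ℝ (Fin 2) →L[ℝ] ℝ) p := by
    simpa using (EuclideanSpace.proj (0 : Fin 2) :
      EuclideanSpace ℝ (Fin 2) →L[ℝ] ℝ).hasFDerivAt (x := p)
  have h1 : HasFDerivAt (fun q : EuclideanSpace ℝ (Fin 2) => q 1)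
      (EuclideanSpace.proj 1 : EuclideanSpace ℝ (Fin 2) →L[ℝ] ℝ) p := by
    simpa using (EuclideanSpace.proj (1 : Fin 2) :
      EuclideanSpace ℝ (Fin 2) →L[ℝ] ℝ).hasFDerivAt (x := p)
  have hs := (h0.mul h0).add (h1.mul h1)
  have hI := (hs.mul hs).sub (((h0.mul h0).sub (h1.mul h1)).const_mul 4)
  refine (congrArg (HasFDerivAt · _ p) ?_).mpr (hI.congr_fderiv ?_)
  · funext q; simp [lemI]; ring
  · ext v
    simp [ContinuousLinearMap.smul_apply, ContinuousLinearMap.add_apply]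
    ring

lemma gradient_lemW (p : EuclideanSpace ℝ (Fin 2)) :
    gradient lemW p = (WithLp.equiv 2 (Fin 2 → ℝ)).symm
      ![lemf (lemI (p 0) (p 1)) * (4 * (p 0) * ((p 0) ^ 2 + (p 1) ^ 2) - 8 * (p 0)),
        lemf (lemI (p 0) (p 1)) * (4 * (p 1) * ((p 0) ^ 2 + (p 1) ^ 2) + 8 * (p 1))] := by
  apply HasGradientAt.gradient
  rw [hasGradientAt_iff_hasFDerivAt]
  have hW := (hasDerivAt_lemV (lemI (p 0) (p 1))).comp_hasFDerivAt p (hasFDerivAt_lemI p)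
  refine hW.congr_fderiv ?_
  ext v
  simp [InnerProductSpace.toDual_apply_apply, PiLp.inner_apply, Fin.sum_univ_two,
    ContinuousLinearMap.smul_apply, ContinuousLinearMap.add_apply]
  ring

/-- `W = V ∘ I` is a Lyapunov function for the Bernoulli-lemniscate vector field:
at every point `p`, `⟨∇W(p), b(p)⟩ = −‖∇W(p)‖²`. -/
theorem lemniscate_lyapunov (p : EuclideanSpace ℝ (Fin 2)) :
    ⟪gradient lemW p, lemb p⟫ = -‖gradient lemW p‖ ^ 2 := by
  rw [← real_inner_self_eq_norm_sq, gradient_lemW]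
  simp only [lemb, PiLp.inner_apply, Fin.sum_univ_two, WithLp.equiv_symm_apply,
    Matrix.cons_val_zero, Matrix.cons_val_one, Matrix.head_cons, RCLike.inner_apply,
    conj_trivial, lemb₁, lemb₂]
  ring
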